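/- Let t ≥ 2 be an integer, let μ ⊆ λ be partitions, and let (λ^{(0)},…,λ^{(t−1)}) and (μ^{(0)},…,μ^{(t−1)}) be the t-quotients of λ and μ. Then ω φ_t s_{λ/μ} = (−1)^{(t−1)·(|λ^{(0)}|+⋯+|λ^{(t−1)}| − |μ^{(0)}|−⋯−|μ^{(t−1)}|)} · φ_t ω s_{λ/μ}. -/

import Mathlib

open scoped BigOperators

noncomputable section

/-! ## The ring of symmetric functions and basic operators -/

/-- The ring of symmetric functions `Λ` (with coefficients in `ℚ`, so that the
half occurring in the definition of `sp_λ` is available), realised as the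
polynomial ring in the algebraically independent complete homogeneous symmetric
functions `h₁, h₂, h₃, …`; the variable `n : ℕ` stands for `h_{n+1}`. -/
abbrev SymF : Type := MvPolynomial ℕ ℚ

/-- The complete homogeneous symmetric function `h_r ∈ Λ`, with `h_0 = 1` and
`h_r = 0` for `r < 0`. -/
def hh (r : ℤ) : SymF :=
  if r < 0 then 0 else if r = 0 then 1 else MvPolynomial.X (r.toNat - 1)

/-- The algebra homomorphism `φ_t : Λ → Λ` determined by `φ_t h_r = h_{r/t}`
if `t ∣ r` and `φ_t h_r = 0` otherwise. -/
def phi (t : ℕ) : SymF →ₐ[ℚ] SymF :=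
  MvPolynomial.aeval fun n =>
    if t ∣ (n + 1) then hh (((n + 1) / t : ℕ) : ℤ) else 0

/-- The elementary symmetric function `e_r`, via the Jacobi–Trudi determinant
`e_r = s_{(1^r)} = det_{1 ≤ i,j ≤ r}(h_{1 - i + j})`. -/
def ee (r : ℕ) : SymF :=
  Matrix.det (Matrix.of fun i j : Fin r => hh (1 + (j : ℤ) - (i : ℤ)))

/-- The involution `ω : Λ → Λ`, determined by `ω h_r = e_r`. -/
def omegaSym : SymF →ₐ[ℚ] SymF :=
  MvPolynomial.aeval fun n => ee (n + 1)

/-- `(-1)^z` for an integer exponent `z`. -/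
def msign (z : ℤ) : ℤ := if Even z then 1 else -1

/-! ## Partitions -/

/-- A partition, encoded as a weakly decreasing, eventually zero function
`ℕ → ℕ` (0-indexed: `f i` is the part `λ_{i+1}`). -/
def IsPartition (f : ℕ → ℕ) : Prop :=
  Antitone f ∧ ∃ N, ∀ i, N ≤ i → f i = 0

/-- The length `l(λ)` (number of nonzero parts). -/
def plen (f : ℕ → ℕ) : ℕ := sInf {N | ∀ i, N ≤ i → f i = 0}

/-- Containment `μ ⊆ λ` of partitions. -/
def SubP (mu lam : ℕ → ℕ) : Prop := ∀ i, mu i ≤ lam i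

/-- The conjugate partition `λ'`. -/
def conjP (f : ℕ → ℕ) : ℕ → ℕ := fun j => Set.ncard {i | j < f i}

/-- The Frobenius rank `rk(λ)` (side length of the Durfee square). -/
def rk (f : ℕ → ℕ) : ℕ := Set.ncard {i | i < f i}

/-- The size `|λ|` of a partition. -/
def psize (f : ℕ → ℕ) : ℕ := ∑ i ∈ Finset.range (plen f), f i

/-- `λ` is `z`-asymmetric, i.e. `λ = (a | a + z)` in Frobenius notation, which
amounts to `λ'_i = λ_i + z` for all `1 ≤ i ≤ rk(λ)`.  `(-1)`-asymmetric
partitions are called orthogonal, `1`-asymmetric ones symplectic, and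
`0`-asymmetric ones are exactly the self-conjugate ones. -/
def ZAsymmetric (z : ℤ) (f : ℕ → ℕ) : Prop :=
  ∀ i < rk f, (conjP f i : ℤ) = (f i : ℤ) + z

/-- The one-row partition `(c)`. -/
def rowP (c : ℕ) : ℕ → ℕ := fun i => if i = 0 then c else 0

/-- `λ` is a `t`-core: no box of the Young diagram has hook length `t`
(the hook length of the box `(i,j)` is `λ_i + λ'_j - i - j + 1`, 1-indexed). -/
def IsTCore (t : ℕ) (f : ℕ → ℕ) : Prop :=
  ∀ i j, j < f i → f i + conjP f j ≠ i + j + 1 + t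

/-! ## Schur functions and universal characters via Jacobi–Trudi determinants -/

/-- The Jacobi–Trudi determinant `det_{1 ≤ i,j ≤ n}(h_{λ_i - μ_j - i + j})`. -/
def sSkewN (lam mu : ℕ → ℕ) (n : ℕ) : SymF :=
  Matrix.det (Matrix.of fun i j : Fin n =>
    hh ((lam i : ℤ) - (mu j : ℤ) - (i : ℤ) + (j : ℤ)))

open Classical in
/-- The skew Schur function `s_{λ/μ}`, defined by the Jacobi–Trudi formula
(and `0` if `μ ⊄ λ`). -/
def sSkew (lam mu : ℕ → ℕ) : SymF :=
  if SubP mu lam then sSkewN lam mu (plen lam) else 0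

/-- The Schur function `s_λ`. -/
def sFun (lam : ℕ → ℕ) : SymF := sSkew lam fun _ => 0

/-- The universal orthogonal character
`o_λ = det_{1 ≤ i,j ≤ n}(h_{λ_i - i + j} - h_{λ_i - i - j})`. -/
def oU (lam : ℕ → ℕ) : SymF :=
  Matrix.det (Matrix.of fun i j : Fin (plen lam) =>
    hh ((lam i : ℤ) - (i : ℤ) + (j : ℤ)) -
      hh ((lam i : ℤ) - (i : ℤ) - (j : ℤ) - 2))

/-- The universal symplectic character
`sp_λ = (1/2) · det_{1 ≤ i,j ≤ n}(h_{λ_i - i + j} + h_{λ_i - i - j + 2})`. -/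
def spU (lam : ℕ → ℕ) : SymF :=
  (1 / 2 : ℚ) • Matrix.det (Matrix.of fun i j : Fin (plen lam) =>
    hh ((lam i : ℤ) - (i : ℤ) + (j : ℤ)) +
      hh ((lam i : ℤ) - (i : ℤ) - (j : ℤ)))

/-- The universal odd orthogonal character
`so_λ = det_{1 ≤ i,j ≤ n}(h_{λ_i - i + j} + h_{λ_i - i - j + 1})`. -/
def soU (lam : ℕ → ℕ) : SymF :=
  Matrix.det (Matrix.of fun i j : Fin (plen lam) =>
    hh ((lam i : ℤ) - (i : ℤ) + (j : ℤ)) +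
      hh ((lam i : ℤ) - (i : ℤ) - (j : ℤ) - 1))

/-- The variant `so⁻_λ = det_{1 ≤ i,j ≤ n}(h_{λ_i - i + j} - h_{λ_i - i - j + 1})`. -/
def soMinusU (lam : ℕ → ℕ) : SymF :=
  Matrix.det (Matrix.of fun i j : Fin (plen lam) =>
    hh ((lam i : ℤ) - (i : ℤ) + (j : ℤ)) -
      hh ((lam i : ℤ) - (i : ℤ) - (j : ℤ) - 1))

/-- The rational universal character `rs_{λ,μ}` (one alphabet), via Koike's block
determinant, for weakly decreasing integer sequences `λ`, `μ` of lengths `n`, `m`. -/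
def rsN (n m : ℕ) (lam mu : ℕ → ℤ) : SymF :=
  Matrix.det (Matrix.fromBlocks
    (Matrix.of fun i j : Fin n => hh (lam i - (i : ℤ) + (j : ℤ)))
    (Matrix.of fun (i : Fin n) (j : Fin m) => hh (lam i - (i : ℤ) - (j : ℤ) - 1))
    (Matrix.of fun (i : Fin m) (j : Fin n) => hh (mu i - (i : ℤ) - (j : ℤ) - 1))
    (Matrix.of fun i j : Fin m => hh (mu i - (i : ℤ) + (j : ℤ))))

/-- `rs_{λ,μ}` for partitions `λ`, `μ`. -/
def rsP (lam mu : ℕ → ℕ) : SymF :=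
  rsN (plen lam) (plen mu) (fun i => (lam i : ℤ)) fun i => (mu i : ℤ)

/-! ## Beta sets, cores, quotients and signs -/

/-- The beta set `β(λ; N) = {λ_i + N - i : 1 ≤ i ≤ N}`. -/
def betaSet (lam : ℕ → ℕ) (N : ℕ) : Finset ℕ :=
  (Finset.range N).image fun i => lam i + (N - 1 - i)

/-- `m_r(λ; N)`: the number of elements of `β(λ; N)` congruent to `r` mod `t`. -/
def mr (t : ℕ) (lam : ℕ → ℕ) (N r : ℕ) : ℕ :=
  ((betaSet lam N).filter fun x => x % t = r).card

/-- The `r`-th component `λ^{(r)}` of the `t`-quotient of `λ` (computed, as per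
the convention of the paper, from a beta set whose size is a multiple of `t`):
writing the elements of `β(λ; N)` in residue class `r` as `ξ_k t + r` with
`ξ_1 > ⋯ > ξ_m ≥ 0`, the `k`-th part is `ξ_k - m + k`. -/
def tQuot (t : ℕ) (lam : ℕ → ℕ) (r : ℕ) : ℕ → ℕ := fun k =>
  let N := t * (plen lam + 1)
  let S := (betaSet lam N).filter fun x => x % t = r
  if k < S.card then (S.sort (· ≤ ·)).getD (S.card - 1 - k) 0 / t + (k + 1) - S.card
  else 0

/-- The `t`-core of `λ`: its `i`-th part is `ξ̃_i - N + i` where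
`ξ̃_1 > ⋯ > ξ̃_N` are the integers `k t + r`, `0 ≤ k < m_r(λ; N)`, `0 ≤ r < t`. -/
def tCore (t : ℕ) (lam : ℕ → ℕ) : ℕ → ℕ := fun i =>
  let N := t * (plen lam + 1)
  let T := (Finset.range t).biUnion fun r =>
    (Finset.range (mr t lam N r)).image fun k => k * t + r
  if i < N then (T.sort (· ≤ ·)).getD (N - 1 - i) 0 + (i + 1) - N else 0

/-- The sign of the permutation `w_t(λ; N)` sorting the beta set so that the
residues mod `t` increase and the entries within a residue class decrease,
computed as `(-1)` to the number of inversions: an inversion is a pair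
`x > y` of elements of the beta set with `x mod t > y mod t`. -/
def sgnW (t : ℕ) (lam : ℕ → ℕ) (N : ℕ) : ℤ :=
  (-1) ^ ((betaSet lam N ×ˢ betaSet lam N).filter fun p : ℕ × ℕ =>
    p.2 < p.1 ∧ p.2 % t < p.1 % t).card

/-! ## Ribbons and tileability -/

/-- The cells of the skew shape `λ/μ` (0-indexed rows and columns). -/
def SkewCells (lam mu : ℕ → ℕ) : Set (ℕ × ℕ) := {c | mu c.1 ≤ c.2 ∧ c.2 < lam c.1}

/-- Two cells are adjacent if they share an edge. -/
def CellAdj (c d : ℕ × ℕ) : Prop :=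
  (c.1 = d.1 ∧ (c.2 + 1 = d.2 ∨ d.2 + 1 = c.2)) ∨
    (c.2 = d.2 ∧ (c.1 + 1 = d.1 ∨ d.1 + 1 = c.1))

/-- A set of cells is (edge-)connected. -/
def ConnectedCells (S : Set (ℕ × ℕ)) : Prop :=
  ∀ c ∈ S, ∀ d ∈ S, Relation.ReflTransGen (fun x y => x ∈ S ∧ y ∈ S ∧ CellAdj x y) c d

/-- The set of cells contains a `2 × 2` square. -/
def Has2x2 (S : Set (ℕ × ℕ)) : Prop :=
  ∃ i j, (i, j) ∈ S ∧ (i + 1, j) ∈ S ∧ (i, j + 1) ∈ S ∧ (i + 1, j + 1) ∈ S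

/-- The skew shape `λ/μ` is a `t`-ribbon: connected, `t` cells, no `2 × 2` square. -/
def IsRibbon (t : ℕ) (lam mu : ℕ → ℕ) : Prop :=
  SubP mu lam ∧ (SkewCells lam mu).ncard = t ∧
    ConnectedCells (SkewCells lam mu) ∧ ¬Has2x2 (SkewCells lam mu)

/-- The height of a ribbon `λ/μ`: one less than the number of rows it occupies. -/
def ribbonHeight (lam mu : ℕ → ℕ) : ℕ :=
  (Prod.fst '' SkewCells lam mu).ncard - 1

/-- `ν` (as `ν 0, ν 1, …, ν k`) is a ribbon decomposition of the skew shape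
`λ/μ` into `t`-ribbons: `ν 0 = μ`, `ν k = λ`, every `ν i` is a partition, and
each `ν (i+1) / ν i` is a `t`-ribbon. -/
def IsRibbonDecomp (t : ℕ) (mu lam : ℕ → ℕ) (k : ℕ) (ν : ℕ → ℕ → ℕ) : Prop :=
  ν 0 = mu ∧ ν k = lam ∧ (∀ i ≤ k, IsPartition (ν i)) ∧
    ∀ i < k, IsRibbon t (ν (i + 1)) (ν i)

/-- The height of a ribbon decomposition: the sum of the heights of its ribbons.
The sign `sgn_t(λ/μ)` is `(-1)` to this quantity (for any decomposition). -/
def decompHeight (ν : ℕ → ℕ → ℕ) (k : ℕ) : ℕ :=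
  ∑ i ∈ Finset.range k, ribbonHeight (ν (i + 1)) (ν i)

/-- The skew shape `λ/μ` is tileable by `t`-ribbons. -/
def Tileable (t : ℕ) (mu lam : ℕ → ℕ) : Prop :=
  ∃ k ν, IsRibbonDecomp t mu lam k ν

/-! ## The signs `ε` of Ayyer–Kumari -/

/-- The exponent `ε^o_{λ;nt}`. -/
def epsO (t : ℕ) (lam : ℕ → ℕ) (n : ℕ) : ℕ :=
  (∑ r ∈ Finset.Icc ((t + 2) / 2) (t - 1), Nat.choose (mr t lam (n * t) r + 1) 2)
    + rk (tCore t lam)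
    + if 2 ∣ t then Nat.choose (n + 1) 2 + n * rk (tCore t lam) else 0

/-- The exponent `ε^sp_{λ;nt}`. -/
def epsSp (t : ℕ) (lam : ℕ → ℕ) (n : ℕ) : ℕ :=
  (∑ r ∈ Finset.Icc (t / 2) (t - 2), Nat.choose (mr t lam (n * t) r + 1) 2)
    + if 2 ∣ t then Nat.choose (n + 1) 2 + n * rk (tCore t lam) else 0

/-- The exponent `ε^so_{λ;nt}`. -/
def epsSo (t : ℕ) (lam : ℕ → ℕ) (n : ℕ) : ℕ :=
  (∑ r ∈ Finset.Icc ((t + 1) / 2) (t - 1), Nat.choose (mr t lam (n * t) r + 1) 2)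
    + if 2 ∣ t then 0 else n * rk (tCore t lam)

/-! ## Evaluation at a finite complex alphabet -/

/-- The complete homogeneous polynomial `h_r(y₁,…,y_N)` evaluated at complex
numbers: the sum over all multisets of size `r` of the product of the values. -/
def hEval {N : ℕ} (y : Fin N → ℂ) (r : ℕ) : ℂ :=
  ∑ m ∈ (Finset.univ : Finset (Fin N)).sym r, (Multiset.map y (m : Multiset (Fin N))).prod

/-- Evaluation of a universal symmetric function at the finite alphabet
`y₁, …, y_N` (substituting `h_r ↦ h_r(y)`). -/
def evalSym {N : ℕ} (y : Fin N → ℂ) : SymF →ₐ[ℚ] ℂ :=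
  MvPolynomial.aeval fun n => hEval y (n + 1)

/-- The Schur polynomial `s_λ(y₁,…,y_N)` (equal to the ratio of alternants when
the `y_i` are distinct, and `0` when `l(λ) > N`). -/
def schurC {N : ℕ} (lam : ℕ → ℕ) (y : Fin N → ℂ) : ℂ := evalSym y (sFun lam)

/-- The algebra homomorphism `φ_t^q : Λ → Λ[q]` with
`φ_t^q h_{at+b} = q^b ∑_{k ≥ 0} q^{kt} h_{a-k}` for `a ≥ 0`, `0 ≤ b ≤ t-1`
(the sum is finite since `h_{a-k} = 0` for `k > a`). -/
def phiQ (t : ℕ) : SymF →ₐ[ℚ] Polynomial SymF :=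
  MvPolynomial.aeval fun m =>
    ∑ k ∈ Finset.range ((m + 1) / t + 1),
      Polynomial.C (hh ((((m + 1) / t - k : ℕ)) : ℤ)) *
        Polynomial.X ^ ((m + 1) % t + k * t)


namespace AK

open Finset MvPolynomial

lemma hh_neg {r : ℤ} (h : r < 0) : hh r = 0 := by simp [hh, h]

lemma hh_zero : hh 0 = 1 := by simp [hh]

lemma hh_succ (m : ℕ) : hh ((m+1 : ℕ) : ℤ) = X m := by
  have h1 : ¬ ((m+1 : ℕ) : ℤ) < 0 := by omega
  have h2 : ¬ ((m+1 : ℕ) : ℤ) = 0 := by omega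
  simp only [hh, if_neg h1, if_neg h2, Int.toNat_natCast, Nat.add_sub_cancel]

lemma phi_X (t m : ℕ) :
    phi t (X m) = if t ∣ (m + 1) then hh (((m + 1) / t : ℕ) : ℤ) else 0 := by
  simp [phi]

lemma omega_X (m : ℕ) : omegaSym (X m) = ee (m + 1) := by
  simp [omegaSym]

lemma ee_zero : ee 0 = 1 := by simp [ee, Matrix.det_fin_zero]

lemma phi_hh (t m : ℕ) :
    phi t (hh (m : ℤ)) = if t ∣ m then hh ((m / t : ℕ) : ℤ) else 0 := by
  cases m with
  | zero => simp [hh_zero]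
  | succ m => rw [hh_succ, phi_X]

lemma omega_hh (m : ℕ) : omegaSym (hh (m : ℤ)) = ee m := by
  cases m with
  | zero => simp [hh_zero, ee_zero]
  | succ m => rw [hh_succ, omega_X]

lemma omega_hh_int (c : ℤ) : omegaSym (hh c) = if 0 ≤ c then ee c.toNat else 0 := by
  rcases le_or_gt 0 c with h | h
  · rw [if_pos h, ← omega_hh, Int.toNat_of_nonneg h]
  · rw [if_neg (not_le.mpr h), hh_neg h, map_zero]

end AK
namespace AK
noncomputable section
open Finset MvPolynomial

/-- matrices over `Fin n` given by an ℕ-indexed entry function -/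
def matN (n : ℕ) (f : ℕ → ℕ → SymF) : Matrix (Fin n) (Fin n) SymF :=
  Matrix.of fun i j : Fin n => f i j

/-- row function for `Dd`. -/
def Hf (c : ℕ) : ℕ → ℕ → SymF := fun i j =>
  if i = 0 then hh ((c : ℤ) + 1 + j) else hh (1 + (j : ℤ) - (i : ℤ))

def Dd (c r : ℕ) : SymF := (matN r (Hf c)).det

lemma ee_eq_matN (r : ℕ) :
    ee r = (matN r (fun i j => hh (1 + (j : ℤ) - (i : ℤ)))).det := rfl

lemma ee_eq_Dd (r : ℕ) : ee r = Dd 0 r := by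
  rw [ee_eq_matN]
  unfold Dd
  congr 1
  funext i j
  show hh (1 + (j:ℤ) - (i:ℤ)) = Hf 0 i j
  unfold Hf
  split
  · rename_i h
    rw [h]; norm_num
  · rfl

lemma det_expand_two (n : ℕ) (A : Matrix (Fin (n+2)) (Fin (n+2)) SymF)
    (hz : ∀ i : Fin (n+2), 2 ≤ (i:ℕ) → A i 0 = 0) :
    A.det = A 0 0 * (A.submatrix ((0 : Fin (n+2)).succAbove) Fin.succ).det
      - A 1 0 * (A.submatrix ((1 : Fin (n+2)).succAbove) Fin.succ).det := by
  rw [Matrix.det_succ_column_zero, Fin.sum_univ_succ, Fin.sum_univ_succ]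
  have h1 : ((0 : Fin (n+1)).succ : Fin (n+2)) = 1 := by
    ext; simp
  have hzero : ∀ i : Fin n,
      ((-1:SymF) ^ (((i.succ.succ : Fin (n+2))):ℕ) * A i.succ.succ 0 *
        (A.submatrix (i.succ.succ).succAbove Fin.succ).det) = 0 := by
    intro i
    rw [hz i.succ.succ (by simp [Fin.val_succ])]
    ring
  rw [Finset.sum_congr rfl (fun i _ => hzero i), Finset.sum_const_zero, add_zero, h1]
  simp [Fin.val_zero, Fin.val_one]
  ring

lemma Dd_rec (c r : ℕ) : Dd c (r + 2) = hh ((c:ℤ) + 1) * ee (r + 1) - Dd (c + 1) (r + 1) := by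
  unfold Dd
  rw [det_expand_two]
  · have hA00 : matN (r+2) (Hf c) 0 0 = hh ((c:ℤ)+1) := by
      show Hf c 0 0 = _
      unfold Hf
      norm_num
    have hA10 : matN (r+2) (Hf c) 1 0 = 1 := by
      show Hf c 1 0 = 1
      unfold Hf
      norm_num [hh_zero]
    have hsub0 : ((matN (r+2) (Hf c)).submatrix ((0 : Fin (r+2)).succAbove) Fin.succ)
        = matN (r+1) (fun i j => hh (1 + (j : ℤ) - (i : ℤ))) := by
      funext k l
      rw [Fin.succAbove_zero]
      show Hf c (k.succ) (l.succ) = _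
      unfold Hf
      rw [if_neg (by simp [Fin.val_succ])]
      show hh _ = hh _
      congr 1
      push_cast [Fin.val_succ]
      ring
    have hsub1 : ((matN (r+2) (Hf c)).submatrix ((1 : Fin (r+2)).succAbove) Fin.succ)
        = matN (r+1) (Hf (c+1)) := by
      funext k l
      show Hf c ((1 : Fin (r+2)).succAbove k) (l.succ) = Hf (c+1) k l
      rcases Fin.eq_zero_or_eq_succ k with hk | ⟨k', hk⟩
      · subst hk
        have h2 : (((1 : Fin (r+2)).succAbove 0) : ℕ) = 0 := by
          simp [Fin.succAbove, Fin.lt_def]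
        rw [h2]
        unfold Hf
        simp only [Fin.val_zero, if_true, eq_self_iff_true]
        congr 1
        push_cast [Fin.val_succ]
        ring
      · subst hk
        have h2 : (((1 : Fin (r+2)).succAbove k'.succ) : ℕ) = (k' : ℕ) + 2 := by
          simp [Fin.succAbove, Fin.lt_def]
        rw [h2]
        unfold Hf
        rw [if_neg (by omega), if_neg (by simp [Fin.val_succ])]
        congr 1
        push_cast [Fin.val_succ]
        omega
    rw [hA00, hA10, hsub0, hsub1, ← ee_eq_matN]
    ring
  · intro i hi
    show Hf c i 0 = 0
    unfold Hf
    rw [if_neg (by omega)]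
    exact hh_neg (by push_cast; omega)

lemma Dd_expand (c r : ℕ) :
    Dd c (r + 1) = ∑ j ∈ Finset.range (r + 1),
      (-1 : SymF) ^ j * hh ((c + 1 + j : ℕ) : ℤ) * ee (r - j) := by
  induction r generalizing c with
  | zero =>
    rw [Finset.sum_range_one, show (0 - 0) = 0 from rfl, ee_zero]
    show Dd c 1 = _
    have : Dd c 1 = Hf c 0 0 := by
      unfold Dd
      rw [show (1 : ℕ) = 0 + 1 from rfl, Matrix.det_fin_one]
      rfl
    rw [this]
    unfold Hf
    rw [if_pos rfl]
    push_cast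
    ring_nf
  | succ r ih =>
    rw [Dd_rec, ih (c+1)]
    conv_rhs => rw [Finset.sum_range_succ']
    have h1 : ∀ j ∈ Finset.range (r+1), (-1:SymF)^(j+1) * hh (((c+1+(j+1) : ℕ)) : ℤ)
        * ee (r+1-(j+1)) = -((-1:SymF)^j * hh (((c+1+1+j : ℕ)) : ℤ) * ee (r-j)) := by
      intro j _
      have e : (c+1+(j+1)) = (c+1+1+j) := by ring
      rw [e, pow_succ, show (r+1-(j+1)) = r - j by omega]
      ring
    rw [Finset.sum_congr rfl h1]
    have e0 : ((c+1+0 : ℕ) : ℤ) = (c:ℤ)+1 := by push_cast; ring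
    rw [Finset.sum_neg_distrib, e0, show (r+1-0) = r+1 from rfl]
    ring

lemma ee_expand (r : ℕ) :
    ee (r + 1) = ∑ j ∈ Finset.range (r + 1),
      (-1 : SymF) ^ j * hh ((j + 1 : ℕ) : ℤ) * ee (r - j) := by
  rw [ee_eq_Dd, Dd_expand]
  exact Finset.sum_congr rfl fun j _ => by rw [show (0+1+j) = j + 1 by ring]

end
end AK
namespace AK
noncomputable section
open Finset MvPolynomial

lemma neg_one_pow_congr {a b : ℕ} (h : a % 2 = b % 2) : (-1 : SymF)^a = (-1)^b := by
  rw [← Nat.div_add_mod a 2, ← Nat.div_add_mod b 2, pow_add, pow_add, pow_mul, pow_mul]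
  simp [neg_one_sq, h]

lemma phi_ee (t : ℕ) (ht : 0 < t) (s : ℕ) :
    phi t (ee s) = if t ∣ s then (-1 : SymF)^((t-1) * (s/t)) * ee (s/t) else 0 := by
  induction s using Nat.strong_induction_on with
  | _ s ih =>
    match s with
    | 0 => simp [ee_zero]
    | r + 1 =>
      rw [ee_expand, map_sum]
      have hterm : ∀ j, phi t ((-1 : SymF) ^ j * hh ((j + 1 : ℕ) : ℤ) * ee (r - j)) =
          (-1 : SymF)^j * (if t ∣ (j+1) then hh (((j+1)/t : ℕ) : ℤ) else 0) *
            (if t ∣ (r - j) then (-1 : SymF)^((t-1) * ((r-j)/t)) * ee ((r-j)/t) else 0) := by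
        intro j
        rw [map_mul, map_mul, map_pow, map_neg, map_one, phi_hh, ih (r - j) (by omega)]
      rw [Finset.sum_congr rfl (fun j _ => hterm j)]
      by_cases hd : t ∣ (r + 1)
      · rw [if_pos hd]
        obtain ⟨m, hm⟩ := hd
        have hm1 : 0 < m := by
          rcases Nat.eq_zero_or_pos m with h | h
          · subst h; simp at hm
          · exact h
        obtain ⟨m', rfl⟩ : ∃ m', m = m' + 1 := ⟨m - 1, by omega⟩
        have hq : (r+1)/t = m' + 1 := by rw [hm, Nat.mul_div_cancel_left _ ht]
        rw [hq]
        -- restrict the sum to indices of the form k*t + (t-1)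
        set I : Finset ℕ := (Finset.range (m'+1)).image (fun k => k*t + (t-1)) with hI
        have hsub : I ⊆ Finset.range (r+1) := by
          intro x hx
          rw [hI, Finset.mem_image] at hx
          obtain ⟨k, hk, rfl⟩ := hx
          rw [Finset.mem_range] at hk ⊢
          have : (k+1) * t ≤ (m'+1) * t := Nat.mul_le_mul_right t (by omega)
          have h2 : (k+1)*t = k*t + t := by ring
          have h3 : (m'+1)*t = t*(m'+1) := by ring
          omega
        have hvanish : ∀ x ∈ Finset.range (r+1), x ∉ I →
            ((-1 : SymF)^x * (if t ∣ (x+1) then hh (((x+1)/t : ℕ) : ℤ) else 0) *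
              (if t ∣ (r - x) then (-1 : SymF)^((t-1) * ((r-x)/t)) * ee ((r-x)/t) else 0)) = 0 := by
          intro x hx hnx
          rw [Finset.mem_range] at hx
          have hnd : ¬ t ∣ (x + 1) := by
            rintro ⟨k', hk'⟩
            apply hnx
            rw [hI, Finset.mem_image]
            have h5 : 1 ≤ k' := by
              rcases Nat.eq_zero_or_pos k' with h | h
              · rw [h, Nat.mul_zero] at hk'; omega
              · exact h
            have h7 : t * k' ≤ t * (m'+1) := by omega
            have h8 : k' ≤ m' + 1 := Nat.le_of_mul_le_mul_left h7 ht
            have h6 : k' - 1 + 1 = k' := by omega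
            have h9 : (k'-1)*t + t = k'*t := by
              calc (k'-1)*t + t = (k'-1+1)*t := by ring
                _ = k'*t := by rw [h6]
            have h10 : k'*t = t*k' := by ring
            refine ⟨k' - 1, Finset.mem_range.mpr (by omega), by omega⟩
          rw [if_neg hnd]
          ring
        rw [← Finset.sum_subset hsub hvanish]
        rw [hI, Finset.sum_image (by
          intro a _ b _ hab
          rcases Nat.lt_trichotomy a b with h | h | h
          · exfalso; have := (Nat.mul_lt_mul_right ht).mpr h; simp only at hab; omega
          · exact h
          · exfalso; have := (Nat.mul_lt_mul_right ht).mpr h; simp only at hab; omega)]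
        rw [ee_expand m', Finset.mul_sum]
        apply Finset.sum_congr rfl
        intro k hk
        rw [Finset.mem_range] at hk
        obtain ⟨d, rfl⟩ : ∃ d, m' = k + d := ⟨m' - k, by omega⟩
        -- arithmetic facts
        have e1 : (k*t + (t-1)) + 1 = (k+1)*t := by
          have : (k+1)*t = k*t + t := by ring
          omega
        have e2 : t ∣ (k*t + (t-1)) + 1 := ⟨k+1, by rw [e1]; ring⟩
        have e3 : ((k*t + (t-1)) + 1)/t = k + 1 := by
          rw [e1, Nat.mul_div_cancel _ ht]
        have e4 : r - (k*t + (t-1)) = t * d := by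
          have h1 : t*(k+d+1) = t*k + t + t*d := by ring
          have h2 : k*t = t*k := by ring
          omega
        have e5 : t ∣ r - (k*t + (t-1)) := by rw [e4]; exact ⟨d, rfl⟩
        have e6 : (r - (k*t + (t-1)))/t = d := by rw [e4, Nat.mul_div_cancel_left _ ht]
        rw [if_pos e2, if_pos e5, e3, e6]
        have e7 : k + d - k = d := by omega
        rw [e7]
        -- sign bookkeeping
        obtain ⟨t', rfl⟩ : ∃ t', t = t' + 1 := ⟨t - 1, by omega⟩
        have e8 : (t' + 1) - 1 = t' := by omega
        rw [e8]
        have e9 : k*(t'+1) + t' + t'*d = t'*(k+d+1) + k := by ring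
        have : (-1:SymF)^(k*(t'+1) + ((t'+1)-1)) * ((-1:SymF)^(t'*d)) =
            (-1:SymF)^(t'*(k+d+1)) * (-1:SymF)^k := by
          rw [← pow_add, ← pow_add, e8]
          exact neg_one_pow_congr (by rw [e9])
        calc (-1:SymF)^(k*(t'+1) + ((t'+1)-1)) * hh (((k+1:ℕ)):ℤ) *
              ((-1:SymF)^(t'*d) * ee d)
            = ((-1:SymF)^(k*(t'+1) + ((t'+1)-1)) * ((-1:SymF)^(t'*d))) *
              (hh (((k+1:ℕ)):ℤ) * ee d) := by ring
          _ = ((-1:SymF)^(t'*(k+d+1)) * (-1:SymF)^k) * (hh (((k+1:ℕ)):ℤ) * ee d) := by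
              rw [this]
          _ = (-1:SymF)^(t'*(k+d+1)) * ((-1:SymF)^k * hh (((k+1:ℕ)):ℤ) * ee d) := by ring
      · rw [if_neg hd]
        apply Finset.sum_eq_zero
        intro j hj
        rw [Finset.mem_range] at hj
        by_cases hjd : t ∣ (j+1)
        · have hnd : ¬ t ∣ (r - j) := by
            intro hc
            apply hd
            have hsum : (j+1) + (r-j) = r+1 := by omega
            rw [← hsum]
            exact dvd_add hjd hc
          rw [if_neg hnd]
          ring
        · rw [if_neg hjd]
          ring

end
end AK
namespace AK
noncomputable section
open Finset MvPolynomial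

def tau (t : ℕ) : SymF →ₐ[ℚ] SymF :=
  MvPolynomial.aeval fun n => (-1 : SymF)^((t-1)*(n+1)) * X n

lemma tau_hh (t r : ℕ) : tau t (hh (r : ℤ)) = (-1 : SymF)^((t-1)*r) * hh (r : ℤ) := by
  cases r with
  | zero => simp [hh_zero]
  | succ m => rw [hh_succ]; simp [tau]

lemma tau_hh_int (t : ℕ) (c : ℤ) :
    tau t (hh c) = (-1 : SymF)^((t-1)*c.toNat) * hh c := by
  rcases le_or_gt 0 c with h | h
  · rw [← Int.toNat_of_nonneg h, tau_hh, Int.toNat_natCast]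
  · rw [hh_neg h, map_zero, mul_zero]

lemma tau_ee (t m : ℕ) : tau t (ee m) = (-1 : SymF)^((t-1)*m) * ee m := by
  have : tau t (ee m) = ((tau t : SymF →+* SymF).mapMatrix
      (matN m (fun i j => hh (1 + (j : ℤ) - (i : ℤ))))).det := by
    rw [ee_eq_matN, ← RingHom.map_det]; rfl
  rw [this]
  have hmat : ((tau t : SymF →+* SymF).mapMatrix
      (matN m (fun i j => hh (1 + (j : ℤ) - (i : ℤ))))) =
      Matrix.of (fun i j : Fin m => ((-1 : SymF)^((t-1)*(1+(j:ℕ)))) *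
        (Matrix.of (fun i j : Fin m => ((-1 : SymF)^((t-1)*(i:ℕ))) *
          (matN m (fun i j => hh (1 + (j : ℤ) - (i : ℤ))) i j)) i j)) := by
    funext i j
    show tau t (hh (1 + (j : ℤ) - (i : ℤ))) = _
    rw [tau_hh_int]
    simp only [Matrix.of_apply]
    show _ = (-1 : SymF)^((t-1)*(1+(j:ℕ))) * ((-1 : SymF)^((t-1)*(i:ℕ)) *
        (matN m (fun i j => hh (1 + (j : ℤ) - (i : ℤ))) i j))
    have hent : (matN m (fun i j => hh (1 + (j : ℤ) - (i : ℤ))) i j)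
        = hh (1 + (j : ℤ) - (i : ℤ)) := rfl
    rw [hent, ← mul_assoc, ← pow_add]
    rcases le_or_gt 0 (1 + (j : ℤ) - (i : ℤ)) with h | h
    · congr 1
      apply neg_one_pow_congr
      have hcast : ((1 + (j : ℤ) - (i : ℤ)).toNat : ℤ) = 1 + (j : ℤ) - (i : ℤ) :=
        Int.toNat_of_nonneg h
      have : (1 + (j : ℤ) - (i : ℤ)).toNat + ((i:ℕ)) = 1 + (j:ℕ) := by omega
      rw [← Nat.mul_add]
      apply Nat.ModEq.mul_left (t-1)
      show _ % 2 = _ % 2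
      omega
    · rw [hh_neg h, mul_zero, mul_zero]
  rw [hmat, Matrix.det_mul_row, Matrix.det_mul_column, ← ee_eq_matN, ← mul_assoc]
  congr 1
  rw [Finset.prod_pow_eq_pow_sum, Finset.prod_pow_eq_pow_sum, ← pow_add]
  apply neg_one_pow_congr
  have h1 : ∑ j : Fin m, (t-1)*(1+(j:ℕ)) = (t-1) * (m + ∑ j : Fin m, (j:ℕ)) := by
    rw [← Finset.mul_sum]
    congr 1
    rw [Finset.sum_add_distrib]
    simp [Finset.card_univ]
  have h2 : ∑ i : Fin m, (t-1)*((i:ℕ)) = (t-1) * (∑ j : Fin m, (j:ℕ)) := by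
    rw [← Finset.mul_sum]
  rw [h1, h2, ← Nat.mul_add]
  apply Nat.ModEq.mul_left (t-1)
  show _ % 2 = _ % 2
  omega

lemma omega_phi_comm (t : ℕ) (ht : 0 < t) (f : SymF) :
    omegaSym (phi t f) = tau t (phi t (omegaSym f)) := by
  have key : omegaSym.comp (phi t) = (tau t).comp ((phi t).comp omegaSym) := by
    apply MvPolynomial.algHom_ext
    intro n
    simp only [AlgHom.comp_apply]
    rw [phi_X, omega_X, phi_ee t ht]
    by_cases hd : t ∣ (n+1)
    · rw [if_pos hd, if_pos hd, omega_hh, map_mul, map_pow, map_neg, map_one, tau_ee,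
        ← mul_assoc, ← pow_add]
      have : Even ((t-1)*((n+1)/t) + (t-1)*((n+1)/t)) := ⟨(t-1)*((n+1)/t), by ring⟩
      rw [this.neg_one_pow, one_mul]
    · rw [if_neg hd, if_neg hd, map_zero, map_zero]
  calc omegaSym (phi t f) = (omegaSym.comp (phi t)) f := rfl
    _ = ((tau t).comp ((phi t).comp omegaSym)) f := by rw [key]
    _ = tau t (phi t (omegaSym f)) := rfl

end
end AK
namespace AK
noncomputable section
open Finset MvPolynomial

/-- if `f` vanishes from `M` on, then `psize f` is the sum of the first `M` values. -/
lemma psize_eq_sum {f : ℕ → ℕ} {M : ℕ} (hM : ∀ i, M ≤ i → f i = 0) :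
    psize f = ∑ i ∈ Finset.range M, f i := by
  have hne : {N | ∀ i, N ≤ i → f i = 0}.Nonempty := ⟨M, hM⟩
  have hmem : ∀ i, plen f ≤ i → f i = 0 := Nat.sInf_mem hne
  have hle : plen f ≤ M := Nat.sInf_le hM
  unfold psize
  exact Finset.sum_subset (by intro x hx; rw [Finset.mem_range] at *; omega)
    (fun x _ hx => hmem x (by rw [Finset.mem_range] at hx; omega))

lemma plen_vanish {f : ℕ → ℕ} (hf : IsPartition f) : ∀ i, plen f ≤ i → f i = 0 :=
  Nat.sInf_mem hf.2

lemma plen_le_plen {mu lam : ℕ → ℕ} (hlam : IsPartition lam) (hsub : SubP mu lam) :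
    plen mu ≤ plen lam :=
  Nat.sInf_le (fun i hi => Nat.le_antisymm (by
    have := plen_vanish hlam i hi
    have := hsub i
    omega) (Nat.zero_le _))

lemma psize_le_psize {mu lam : ℕ → ℕ} (hlam : IsPartition lam) (hmu : IsPartition mu)
    (hsub : SubP mu lam) : psize mu ≤ psize lam := by
  rw [psize_eq_sum (M := plen lam + plen mu) (fun i hi => plen_vanish hlam i (by omega)),
    psize_eq_sum (M := plen lam + plen mu) (f := mu) (fun i hi => plen_vanish hmu i (by omega))]
  exact Finset.sum_le_sum fun i _ => hsub i

def tri (n : ℕ) : ℕ := ∑ i ∈ Finset.range n, i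

lemma tri_add (a b : ℕ) : tri (a + b) = tri a + a * b + tri b := by
  induction b with
  | zero => simp [tri]
  | succ b ih =>
    have h1 : a + (b+1) = (a + b) + 1 := by omega
    have h2 : a*(b+1) = a*b + a := by ring
    unfold tri at *
    rw [h1, Finset.sum_range_succ, Finset.sum_range_succ, ih]
    omega

/-- the β-numbers are strictly decreasing in `i`. -/
lemma beta_lt {lam : ℕ → ℕ} (hlam : Antitone lam) {N i j : ℕ} (hij : i < j) (hj : j < N) :
    lam j + (N - 1 - j) < lam i + (N - 1 - i) := by
  have := hlam (le_of_lt hij)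
  omega

lemma beta_injOn {lam : ℕ → ℕ} (hlam : Antitone lam) (N : ℕ) :
    Set.InjOn (fun i => lam i + (N - 1 - i)) (Finset.range N) := by
  intro i hi j hj hij
  simp only [Finset.coe_range, Set.mem_Iio] at hi hj
  rcases Nat.lt_trichotomy i j with h | h | h
  · exact absurd hij (Nat.ne_of_gt (beta_lt hlam h hj))
  · exact h
  · exact absurd hij (Nat.ne_of_lt (beta_lt hlam h hi))

lemma card_betaSet {lam : ℕ → ℕ} (hlam : Antitone lam) (N : ℕ) :
    (betaSet lam N).card = N := by
  unfold betaSet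
  rw [Finset.card_image_of_injOn (beta_injOn hlam N), Finset.card_range]

lemma sum_betaSet {lam : ℕ → ℕ} (hlam : Antitone lam)
    (hvan : ∀ i, plen lam ≤ i → lam i = 0) {N : ℕ} (hN : plen lam ≤ N) :
    ∑ x ∈ betaSet lam N, x = psize lam + tri N := by
  unfold betaSet
  rw [Finset.sum_image (fun x hx y hy h => beta_injOn hlam N (by simpa using hx)
    (by simpa using hy) h)]
  rw [Finset.sum_add_distrib]
  congr 1
  · exact (psize_eq_sum (fun i hi => hvan i (by omega))).symm
  · unfold tri
    exact Finset.sum_range_reflect id N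

lemma mr_eq_count (t : ℕ) {lam : ℕ → ℕ} (hlam : Antitone lam) (N r : ℕ) :
    mr t lam N r =
      ((Finset.range N).filter fun i => (lam i + (N - 1 - i)) % t = r).card := by
  unfold mr betaSet
  rw [Finset.filter_image, Finset.card_image_of_injOn
    ((beta_injOn hlam N).mono (by
      intro x hx
      simp only [Finset.coe_filter, Set.mem_setOf_eq] at hx
      have := hx.1
      rw [Finset.mem_range] at this
      simp [this]))]

lemma mr_total {t : ℕ} (ht : 0 < t) {lam : ℕ → ℕ} (hlam : Antitone lam) (N : ℕ) :
    ∑ r ∈ Finset.range t, mr t lam N r = N := by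
  unfold mr
  rw [← Finset.card_eq_sum_card_fiberwise (f := fun x => x % t)
    (fun x _ => Finset.mem_range.mpr (Nat.mod_lt x ht)), card_betaSet hlam]

lemma mr_succ {t : ℕ} (ht : 0 < t) {lam : ℕ → ℕ} (hlam : Antitone lam)
    (hvan : ∀ i, plen lam ≤ i → lam i = 0) {N r : ℕ} (hN : plen lam ≤ N) (hr : r < t) :
    mr t lam (N + t) r = mr t lam N r + 1 := by
  rw [mr_eq_count t hlam, mr_eq_count t hlam]
  have hsplit : Finset.range (N + t) = Finset.range N ∪ Finset.Ico N (N + t) := by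
    rw [Finset.range_eq_Ico, Finset.range_eq_Ico]
    exact (Finset.Ico_union_Ico_eq_Ico (c := N + t) (Nat.zero_le N) (by omega)).symm
  rw [hsplit, Finset.filter_union, Finset.card_union_of_disjoint (by
    apply Finset.disjoint_filter_filter
    rw [Finset.range_eq_Ico]
    exact Finset.Ico_disjoint_Ico_consecutive 0 N (N+t))]
  congr 1
  · apply Finset.card_bij (fun a _ => a)
    · intro a ha
      rw [Finset.mem_filter, Finset.mem_range] at ha ⊢
      obtain ⟨ha1, ha2⟩ := ha
      refine ⟨ha1, ?_⟩
      have h1 : lam a + (N + t - 1 - a) = (lam a + (N - 1 - a)) + t := by omega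
      rw [h1, Nat.add_mod_right] at ha2
      exact ha2
    · intro a ha b hb h; exact h
    · intro b hb
      rw [Finset.mem_filter, Finset.mem_range] at hb
      refine ⟨b, ?_, rfl⟩
      rw [Finset.mem_filter, Finset.mem_range]
      obtain ⟨hb1, hb2⟩ := hb
      refine ⟨hb1, ?_⟩
      have h1 : lam b + (N + t - 1 - b) = (lam b + (N - 1 - b)) + t := by omega
      rw [h1, Nat.add_mod_right]
      exact hb2
  · have hone : (Finset.Ico N (N+t)).filter
        (fun i => (lam i + (N + t - 1 - i)) % t = r) = {N + t - 1 - r} := by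
      ext x
      rw [Finset.mem_filter, Finset.mem_Ico, Finset.mem_singleton]
      constructor
      · rintro ⟨⟨h1, h2⟩, h3⟩
        rw [hvan x (by omega), Nat.zero_add, Nat.mod_eq_of_lt (by omega)] at h3
        omega
      · rintro rfl
        refine ⟨⟨by omega, by omega⟩, ?_⟩
        rw [hvan (N+t-1-r) (by omega), Nat.zero_add, Nat.mod_eq_of_lt (by omega)]
        omega
    rw [hone, Finset.card_singleton]

end
end AK
namespace AK
noncomputable section
open Finset MvPolynomial

def Ecount (t : ℕ) (lam : ℕ → ℕ) (N : ℕ) : ℕ :=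
  ∑ r ∈ Finset.range t, (t * tri (mr t lam N r) + r * mr t lam N r)

lemma E_step {t : ℕ} (ht : 0 < t) {lam : ℕ → ℕ} (hlam : Antitone lam)
    (hvan : ∀ i, plen lam ≤ i → lam i = 0) {N : ℕ} (hN : plen lam ≤ N) :
    Ecount t lam (N + t) = Ecount t lam N + t * N + tri t := by
  unfold Ecount
  have h1 : ∀ r ∈ Finset.range t,
      t * tri (mr t lam (N+t) r) + r * mr t lam (N+t) r =
      (t * tri (mr t lam N r) + r * mr t lam N r) + (t * mr t lam N r + r) := by
    intro r hr
    rw [Finset.mem_range] at hr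
    rw [mr_succ ht hlam hvan hN hr]
    have htri : tri (mr t lam N r + 1) = tri (mr t lam N r) + mr t lam N r := by
      unfold tri
      rw [Finset.sum_range_succ]
    rw [htri]
    ring
  have h2 : ∑ r ∈ Finset.range t, (t * mr t lam N r + r) = t * N + tri t := by
    rw [Finset.sum_add_distrib, ← Finset.mul_sum, mr_total ht hlam]
    unfold tri
    rfl
  rw [Finset.sum_congr rfl h1, Finset.sum_add_distrib, h2, ← Nat.add_assoc]

lemma E_invariant {t : ℕ} (ht : 0 < t) {lam : ℕ → ℕ} (hlam : Antitone lam)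
    (hvan : ∀ i, plen lam ≤ i → lam i = 0) {N : ℕ} (hN : plen lam ≤ N) (k : ℕ) :
    (Ecount t lam (N + k*t) : ℤ) - tri (N + k*t) = (Ecount t lam N : ℤ) - tri N := by
  induction k with
  | zero => simp
  | succ k ih =>
    have h1 : N + (k+1)*t = (N + k*t) + t := by ring
    rw [h1, E_step ht hlam hvan (by omega), tri_add]
    push_cast
    push_cast at ih
    have h2 : ((N + k*t) * t : ℤ) = t * (N + k*t) := by ring
    omega

lemma list_sum_getD (l : List ℕ) :
    ∑ j ∈ Finset.range l.length, l.getD j 0 = l.sum := by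
  induction l with
  | nil => simp
  | cons a l ih =>
    rw [List.length_cons, Finset.sum_range_succ', List.sum_cons]
    have : ∀ j, (a :: l).getD (j+1) 0 = l.getD j 0 := fun j => rfl
    rw [Finset.sum_congr rfl (fun j _ => this j), ih]
    have : (a :: l).getD 0 0 = a := rfl
    rw [this]
    ring

/-- size of one quotient component, in terms of its β-numbers. -/
lemma quot_size_r (t : ℕ) (ht : 0 < t) (lam : ℕ → ℕ) (r : ℕ) :
    t * psize (tQuot t lam r) +
      (t * tri (mr t lam (t * (plen lam + 1)) r) + r * mr t lam (t * (plen lam + 1)) r) =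
    ∑ x ∈ (betaSet lam (t * (plen lam + 1))).filter (fun x => x % t = r), x := by
  set N := t * (plen lam + 1) with hN
  set S := (betaSet lam N).filter (fun x => x % t = r) with hS
  set m := S.card with hm
  set L := S.sort (· ≤ ·) with hL
  have hlen : L.length = m := Finset.length_sort _
  have hmem : ∀ j, j < m → L.getD j 0 ∈ S := by
    intro j hj
    rw [List.getD_eq_getElem (l := L) (d := 0) (by omega)]
    rw [← Finset.mem_sort (α := ℕ) (· ≤ ·)]
    exact List.getElem_mem _
  have hres : ∀ j, j < m → (L.getD j 0) % t = r := by
    intro j hj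
    have := hmem j hj
    rw [hS, Finset.mem_filter] at this
    exact this.2
  have hsorted : L.SortedLT := Finset.sortedLT_sort S
  have hmono : ∀ j j', j < j' → j' < m → L.getD j 0 < L.getD j' 0 := by
    intro j j' hjj hj'
    rw [List.getD_eq_getElem (l := L) (d := 0) (by omega), List.getD_eq_getElem (l := L) (d := 0) (by omega)]
    exact hsorted.getElem_lt_getElem_iff.mpr hjj
  -- the ξ's
  have hximono : ∀ j j', j < j' → j' < m → L.getD j 0 / t < L.getD j' 0 / t := by
    intro j j' hjj hj'
    have h1 := Nat.div_add_mod (L.getD j 0) t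
    have h2 := Nat.div_add_mod (L.getD j' 0) t
    rw [hres j (by omega)] at h1
    rw [hres j' hj'] at h2
    have h3 := hmono j j' hjj hj'
    have h4 : t * (L.getD j 0 / t) < t * (L.getD j' 0 / t) := by omega
    exact Nat.lt_of_mul_lt_mul_left h4
  have hxige : ∀ j, j < m → j ≤ L.getD j 0 / t := by
    intro j
    induction j with
    | zero => intro _; exact Nat.zero_le _
    | succ j ih =>
      intro hj
      have := hximono j (j+1) (by omega) hj
      have := ih (by omega)
      omega
  -- the parts of the quotient
  have hq : ∀ k, tQuot t lam r k =
      if k < m then L.getD (m - 1 - k) 0 / t + (k + 1) - m else 0 := fun k => rfl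
  have hvanq : ∀ k, m ≤ k → tQuot t lam r k = 0 := by
    intro k hk
    rw [hq k, if_neg (by omega)]
  have hpsize : psize (tQuot t lam r) = ∑ k ∈ Finset.range m, tQuot t lam r k :=
    psize_eq_sum hvanq
  have hkey : ∑ k ∈ Finset.range m, (tQuot t lam r k + (m - 1 - k)) =
      ∑ j ∈ Finset.range m, L.getD j 0 / t := by
    rw [← Finset.sum_range_reflect (fun j => L.getD j 0 / t) m]
    apply Finset.sum_congr rfl
    intro k hk
    rw [Finset.mem_range] at hk
    rw [hq k, if_pos hk]
    have := hxige (m - 1 - k) (by omega)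
    omega
  have hsum1 : psize (tQuot t lam r) + tri m = ∑ j ∈ Finset.range m, L.getD j 0 / t := by
    rw [← hkey, Finset.sum_add_distrib, hpsize]
    congr 1
    unfold tri
    exact (Finset.sum_range_reflect id m).symm
  have hsum2 : t * (∑ j ∈ Finset.range m, L.getD j 0 / t) + r * m =
      ∑ j ∈ Finset.range m, L.getD j 0 := by
    rw [Finset.mul_sum]
    have : ∀ j ∈ Finset.range m, t * (L.getD j 0 / t) + r = L.getD j 0 := by
      intro j hj
      rw [Finset.mem_range] at hj
      have h1 := Nat.div_add_mod (L.getD j 0) t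
      rw [hres j hj] at h1
      omega
    calc ∑ j ∈ Finset.range m, t * (L.getD j 0 / t) + r * m
        = ∑ j ∈ Finset.range m, (t * (L.getD j 0 / t) + r) := by
          rw [Finset.sum_add_distrib, Finset.sum_const, Finset.card_range, smul_eq_mul,
            mul_comm]
      _ = ∑ j ∈ Finset.range m, L.getD j 0 := Finset.sum_congr rfl this
  have hsum3 : ∑ j ∈ Finset.range m, L.getD j 0 = ∑ x ∈ S, x := by
    rw [← hlen, list_sum_getD]
    have hperm : L.Perm S.toList := Finset.sort_perm_toList S (· ≤ ·)
    rw [hperm.sum_eq]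
    have := Finset.sum_map_toList S id
    simpa using this
  calc t * psize (tQuot t lam r) + (t * tri (mr t lam N r) + r * mr t lam N r)
      = t * (psize (tQuot t lam r) + tri m) + r * m := by rw [hm]; unfold mr; rw [← hS]; ring
    _ = t * (∑ j ∈ Finset.range m, L.getD j 0 / t) + r * m := by rw [hsum1]
    _ = ∑ x ∈ S, x := by rw [hsum2, hsum3]

/-- the master counting identity `t·Σ|λ^{(r)}| + E = |λ| + tri N₀`. -/
lemma quot_size (t : ℕ) (ht : 0 < t) (lam : ℕ → ℕ) (hlam : Antitone lam)
    (hvan : ∀ i, plen lam ≤ i → lam i = 0) :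
    t * (∑ r ∈ Finset.range t, psize (tQuot t lam r)) +
      Ecount t lam (t * (plen lam + 1)) =
    psize lam + tri (t * (plen lam + 1)) := by
  have hN : plen lam ≤ t * (plen lam + 1) := by nlinarith
  rw [← sum_betaSet hlam hvan hN]
  rw [← Finset.sum_fiberwise_of_maps_to (g := fun x => x % t) (t := Finset.range t)
    (fun x _ => Finset.mem_range.mpr (Nat.mod_lt x ht)) (fun x => x)]
  unfold Ecount
  rw [Finset.mul_sum, ← Finset.sum_add_distrib]
  apply Finset.sum_congr rfl
  intro r _
  have := quot_size_r t ht lam r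
  simpa using this

end
end AK
namespace AK
noncomputable section
open Finset MvPolynomial

lemma msign_natCast (n : ℕ) : ((msign (n : ℤ) : ℤ) : SymF) = (-1 : SymF)^n := by
  unfold msign
  split
  · rename_i h
    rw [Int.even_coe_nat] at h
    rw [h.neg_one_pow]
    norm_num
  · rename_i h
    rw [Int.even_coe_nat] at h
    rw [(Nat.not_even_iff_odd.mp h).neg_one_pow]
    norm_num

lemma phi_omega_hh (t : ℕ) (ht : 0 < t) (c : ℤ) :
    phi t (omegaSym (hh c)) =
      if 0 ≤ c ∧ (t : ℤ) ∣ c then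
        (-1 : SymF)^((t-1) * (c / t).toNat) * ee ((c / t).toNat) else 0 := by
  rcases lt_or_ge c 0 with h | h
  · rw [hh_neg h, map_zero, map_zero, if_neg (by rintro ⟨h1, -⟩; omega)]
  · obtain ⟨n, rfl⟩ : ∃ n : ℕ, c = (n : ℤ) := ⟨c.toNat, (Int.toNat_of_nonneg h).symm⟩
    rw [omega_hh, phi_ee t ht]
    by_cases hd : t ∣ n
    · rw [if_pos hd, if_pos ⟨h, Int.natCast_dvd_natCast.mpr hd⟩]
      have : ((n : ℤ) / (t : ℤ)).toNat = n / t := by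
        rw [← Int.natCast_div, Int.toNat_natCast]
      rw [this]
    · rw [if_neg hd, if_neg (by
        rintro ⟨-, h2⟩
        exact hd (Int.natCast_dvd_natCast.mp h2))]

/-- the matrix of `φ_t ω s_{λ/μ}`. -/
def Mmat (t : ℕ) (lam mu : ℕ → ℕ) (N : ℕ) : Matrix (Fin N) (Fin N) SymF :=
  Matrix.of fun i j => phi t (omegaSym (hh ((lam i : ℤ) - (mu j : ℤ) - (i : ℤ) + (j : ℤ))))

lemma phi_omega_sSkewN (t : ℕ) (lam mu : ℕ → ℕ) (N : ℕ) :
    phi t (omegaSym (sSkewN lam mu N)) = (Mmat t lam mu N).det := by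
  unfold sSkewN
  rw [show (omegaSym : SymF → SymF) = ((omegaSym : SymF →+* SymF) : SymF → SymF) from rfl]
  rw [RingHom.map_det]
  rw [show (phi t : SymF → SymF) = ((phi t : SymF →+* SymF) : SymF → SymF) from rfl]
  rw [RingHom.map_det]
  rfl

lemma cfun_eq {N : ℕ} (lam mu : ℕ → ℕ) (i j : Fin N) :
    (lam i : ℤ) - (mu j : ℤ) - (i : ℤ) + (j : ℤ) =
      ((lam i + (N - 1 - (i:ℕ)) : ℕ) : ℤ) - ((mu j + (N - 1 - (j:ℕ)) : ℕ) : ℤ) := by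
  have hi := i.isLt
  have hj := j.isLt
  push_cast
  omega

lemma dvd_iff_res (t A B : ℕ) : (t : ℤ) ∣ ((A : ℤ) - (B : ℤ)) ↔ A % t = B % t := by
  rw [show ((A : ℤ) - B) = -((B : ℤ) - A) by ring, Int.dvd_neg]
  exact (Nat.modEq_iff_dvd).symm

lemma sum_cfun {N : ℕ} (lam mu : ℕ → ℕ)
    (hlamvan : ∀ i, plen lam ≤ i → lam i = 0) (hmuvan : ∀ i, plen mu ≤ i → mu i = 0)
    (hlamN : plen lam ≤ N) (hmuN : plen mu ≤ N) (σ : Equiv.Perm (Fin N)) :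
    ∑ i : Fin N, ((lam (σ i) : ℤ) - (mu i : ℤ) - ((σ i : Fin N) : ℤ) + (i : ℤ)) =
      (psize lam : ℤ) - (psize mu : ℤ) := by
  rw [Finset.sum_add_distrib, Finset.sum_sub_distrib, Finset.sum_sub_distrib]
  have h1 : ∑ i : Fin N, (lam (σ i) : ℤ) = (psize lam : ℤ) := by
    rw [Equiv.sum_comp σ (fun i : Fin N => (lam i : ℤ))]
    rw [Fin.sum_univ_eq_sum_range (fun i => (lam i : ℤ)) N]
    rw [psize_eq_sum (M := N) (fun i hi => hlamvan i (by omega))]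
    push_cast
    rfl
  have h2 : ∑ i : Fin N, (mu i : ℤ) = (psize mu : ℤ) := by
    rw [Fin.sum_univ_eq_sum_range (fun i => (mu i : ℤ)) N]
    rw [psize_eq_sum (M := N) (fun i hi => hmuvan i (by omega))]
    push_cast
    rfl
  have h3 : ∑ i : Fin N, ((σ i : Fin N) : ℤ) = ∑ i : Fin N, (i : ℤ) :=
    Equiv.sum_comp σ (fun i : Fin N => (i : ℤ))
  rw [h1, h2, h3]
  ring

lemma detM_zero_of_not_dvd {t : ℕ} (ht : 0 < t) {lam mu : ℕ → ℕ}
    (hlamvan : ∀ i, plen lam ≤ i → lam i = 0) (hmuvan : ∀ i, plen mu ≤ i → mu i = 0)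
    {N : ℕ} (hlamN : plen lam ≤ N) (hmuN : plen mu ≤ N)
    (hnd : ¬ (t : ℤ) ∣ ((psize lam : ℤ) - (psize mu : ℤ))) :
    (Mmat t lam mu N).det = 0 := by
  rw [Matrix.det_apply]
  apply Finset.sum_eq_zero
  intro σ _
  by_cases hall : ∀ i : Fin N, 0 ≤ ((lam (σ i) : ℤ) - (mu i : ℤ) - ((σ i : Fin N) : ℤ) + (i : ℤ))
      ∧ (t : ℤ) ∣ ((lam (σ i) : ℤ) - (mu i : ℤ) - ((σ i : Fin N) : ℤ) + (i : ℤ))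
  · exfalso
    apply hnd
    rw [← sum_cfun lam mu hlamvan hmuvan hlamN hmuN σ]
    exact Finset.dvd_sum (fun i _ => (hall i).2)
  · push_neg at hall
    obtain ⟨i, hi⟩ := hall
    have hzero : Mmat t lam mu N (σ i) i = 0 := by
      unfold Mmat
      show phi t (omegaSym (hh _)) = 0
      rw [phi_omega_hh t ht, if_neg (by
        intro ⟨h1, h2⟩
        exact (hi h1) h2)]
    rw [Finset.prod_eq_zero (f := fun j : Fin N => Mmat t lam mu N (σ j) j)
      (Finset.mem_univ i) hzero, smul_zero]

lemma tau_detM {t : ℕ} (ht : 0 < t) {lam mu : ℕ → ℕ}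
    (hlamvan : ∀ i, plen lam ≤ i → lam i = 0) (hmuvan : ∀ i, plen mu ≤ i → mu i = 0)
    {N : ℕ} (hlamN : plen lam ≤ N) (hmuN : plen mu ≤ N)
    (hd : (t : ℤ) ∣ ((psize lam : ℤ) - (psize mu : ℤ))) :
    tau t (Mmat t lam mu N).det =
      ((msign (((t : ℤ) - 1) * (((psize lam : ℤ) - (psize mu : ℤ)) / t)) : ℤ) : SymF) *
        (Mmat t lam mu N).det := by
  set D : ℤ := (psize lam : ℤ) - (psize mu : ℤ) with hD
  rw [Matrix.det_apply, map_sum, Finset.mul_sum]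
  apply Finset.sum_congr rfl
  intro σ _
  simp only [Units.smul_def, zsmul_eq_mul]
  rw [map_mul, map_intCast, map_prod]
  by_cases hall : ∀ i : Fin N, 0 ≤ ((lam (σ i) : ℤ) - (mu i : ℤ) - ((σ i : Fin N) : ℤ) + (i : ℤ))
      ∧ (t : ℤ) ∣ ((lam (σ i) : ℤ) - (mu i : ℤ) - ((σ i : Fin N) : ℤ) + (i : ℤ))
  · -- every entry is a signed e, and the signs multiply up to the global sign
    set q : Fin N → ℕ := fun i =>
      ((((lam (σ i) : ℤ) - (mu i : ℤ) - ((σ i : Fin N) : ℤ) + (i : ℤ))) / t).toNat with hq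
    have hentry : ∀ i : Fin N, Mmat t lam mu N (σ i) i =
        (-1 : SymF)^((t-1) * q i) * ee (q i) := by
      intro i
      show phi t (omegaSym (hh _)) = _
      rw [phi_omega_hh t ht, if_pos (hall i)]
    have htau : ∀ i : Fin N, tau t (Mmat t lam mu N (σ i) i) =
        (-1 : SymF)^((t-1) * q i) * Mmat t lam mu N (σ i) i := by
      intro i
      rw [hentry i, map_mul, map_pow, map_neg, map_one, tau_ee]
    rw [Finset.prod_congr rfl (fun i _ => htau i), Finset.prod_mul_distrib,
      Finset.prod_pow_eq_pow_sum]
    have hsumq : ((∑ i : Fin N, q i : ℕ) : ℤ) = D / t := by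
      have h1 : ∀ i : Fin N, ((q i : ℕ) : ℤ) =
          (((lam (σ i) : ℤ) - (mu i : ℤ) - ((σ i : Fin N) : ℤ) + (i : ℤ))) / t := by
        intro i
        rw [hq]
        exact Int.toNat_of_nonneg (Int.ediv_nonneg (hall i).1 (by positivity))
      have h2 : (t : ℤ) * (∑ i : Fin N, ((q i : ℕ) : ℤ)) = D := by
        rw [hD, ← sum_cfun lam mu hlamvan hmuvan hlamN hmuN σ, Finset.mul_sum]
        apply Finset.sum_congr rfl
        intro i _
        rw [h1 i]
        exact Int.mul_ediv_cancel' (hall i).2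
      have h5 : ((∑ i : Fin N, q i : ℕ) : ℤ) = ∑ i : Fin N, ((q i : ℕ) : ℤ) := by
        push_cast
        rfl
      rw [h5, ← h2, Int.mul_ediv_cancel_left _ (by positivity)]
    have hsign : ((msign (((t : ℤ) - 1) * (D / t)) : ℤ) : SymF) =
        (-1 : SymF)^((t-1) * ∑ i : Fin N, q i) := by
      have h3 : ((t : ℤ) - 1) * (D / t) = (((t-1) * ∑ i : Fin N, q i : ℕ) : ℤ) := by
        rw [← hsumq]
        push_cast [Nat.cast_sub (by omega : 1 ≤ t)]
        ring
      rw [h3, msign_natCast]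
    rw [← Finset.mul_sum, hsign]
    ring
  · push_neg at hall
    obtain ⟨i, hi⟩ := hall
    have hzero : Mmat t lam mu N (σ i) i = 0 := by
      show phi t (omegaSym (hh _)) = 0
      rw [phi_omega_hh t ht, if_neg (by intro ⟨h1, h2⟩; exact (hi h1) h2)]
    rw [Finset.prod_eq_zero (f := fun j : Fin N => Mmat t lam mu N (σ j) j)
      (Finset.mem_univ i) hzero,
      Finset.prod_eq_zero (f := fun j : Fin N => tau t (Mmat t lam mu N (σ j) j))
      (Finset.mem_univ i) (by
        show (tau t) (Mmat t lam mu N (σ i) i) = 0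
        rw [hzero, map_zero])]
    ring

lemma count_fin {N : ℕ} (p : ℕ → Prop) [DecidablePred p] :
    ((Finset.univ : Finset (Fin N)).filter (fun i : Fin N => p (i : ℕ))).card =
      ((Finset.range N).filter p).card := by
  rw [Finset.card_filter, Finset.card_filter,
    Fin.sum_univ_eq_sum_range (fun i => if p i then 1 else 0) N]

lemma detM_zero_of_mr_ne {t : ℕ} (ht : 0 < t) {lam mu : ℕ → ℕ}
    (hlam : Antitone lam) (hmu : Antitone mu)
    {N : ℕ} {r : ℕ}
    (hgt : mr t mu N r < mr t lam N r) :
    (Mmat t lam mu N).det = 0 := by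
  classical
  set R := (Finset.univ : Finset (Fin N)).filter
    (fun i : Fin N => (lam (i:ℕ) + (N - 1 - (i:ℕ))) % t = r) with hR
  set C := (Finset.univ : Finset (Fin N)).filter
    (fun j : Fin N => (mu (j:ℕ) + (N - 1 - (j:ℕ))) % t = r) with hC
  have hcardR : R.card = mr t lam N r := by
    rw [mr_eq_count t hlam, hR]
    exact count_fin (fun x => (lam x + (N - 1 - x)) % t = r)
  have hcardC : C.card = mr t mu N r := by
    rw [mr_eq_count t hmu, hC]
    exact count_fin (fun x => (mu x + (N - 1 - x)) % t = r)
  rw [Matrix.det_apply]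
  apply Finset.sum_eq_zero
  intro σ _
  have hex : ∃ i : Fin N, Mmat t lam mu N (σ i) i = 0 := by
    by_contra h
    push_neg at h
    have hmap : ∀ x ∈ R, σ.symm x ∈ C := by
      intro x hx
      have hne := h (σ.symm x)
      rw [Equiv.apply_symm_apply] at hne
      have hdvd : (t : ℤ) ∣ ((lam x : ℤ) - (mu (σ.symm x) : ℤ) - (x : ℤ) + ((σ.symm x : Fin N) : ℤ)) := by
        by_contra hnd
        apply hne
        show phi t (omegaSym (hh _)) = 0
        rw [phi_omega_hh t ht, if_neg (by rintro ⟨-, h2⟩; exact hnd h2)]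
      rw [cfun_eq lam mu x (σ.symm x), dvd_iff_res] at hdvd
      rw [hC, Finset.mem_filter]
      rw [hR, Finset.mem_filter] at hx
      exact ⟨Finset.mem_univ _, by rw [← hdvd]; exact hx.2⟩
    have hle : R.card ≤ C.card :=
      Finset.card_le_card_of_injOn σ.symm hmap (fun a _ b _ h => σ.symm.injective h)
    omega
  obtain ⟨i, hi⟩ := hex
  rw [Finset.prod_eq_zero (f := fun j : Fin N => Mmat t lam mu N (σ j) j)
    (Finset.mem_univ i) hi, smul_zero]

end
end AK
namespace AK
noncomputable section
open Finset MvPolynomial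

lemma sSkewN_succ (lam mu : ℕ → ℕ) (n : ℕ) (hlamn : lam n = 0) (hmun : mu n = 0) :
    sSkewN lam mu (n + 1) = sSkewN lam mu n := by
  unfold sSkewN
  rw [Matrix.det_succ_row _ (Fin.last n)]
  rw [Finset.sum_eq_single (Fin.last n)]
  · simp only [Matrix.of_apply, Fin.val_last, hlamn, hmun]
    have harg : ((0:ℕ):ℤ) - ((0:ℕ):ℤ) - (n:ℤ) + (n:ℤ) = 0 := by push_cast; ring
    rw [harg, hh_zero]
    have hsub : ((Matrix.of fun i j : Fin (n+1) =>
        hh ((lam i : ℤ) - (mu j : ℤ) - (i : ℤ) + (j : ℤ))).submatrix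
          (Fin.last n).succAbove (Fin.last n).succAbove) =
        (Matrix.of fun i j : Fin n =>
          hh ((lam i : ℤ) - (mu j : ℤ) - (i : ℤ) + (j : ℤ))) := by
      funext k l
      rw [Fin.succAbove_last]
      simp [Matrix.submatrix_apply, Fin.coe_castSucc]
    rw [hsub]
    have heven : Even (n + n) := ⟨n, rfl⟩
    rw [heven.neg_one_pow]
    ring
  · intro j _ hj
    have hjlt : (j:ℕ) < n := by
      have h1 := j.isLt
      have h2 : (j:ℕ) ≠ n := fun h => hj (by ext; simp [h, Fin.val_last])
      omega
    simp only [Matrix.of_apply, Fin.val_last, hlamn]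
    have harg : ((0:ℕ):ℤ) - ((mu (j:ℕ)):ℤ) - (n:ℤ) + ((j:ℕ):ℤ) < 0 := by push_cast; omega
    rw [hh_neg harg]
    ring
  · intro h
    exact absurd (Finset.mem_univ _) h

lemma sSkewN_add (lam mu : ℕ → ℕ) (hlam : IsPartition lam) (hmu : IsPartition mu)
    (hsub : SubP mu lam) {n : ℕ} (hn : plen lam ≤ n) (k : ℕ) :
    sSkewN lam mu (n + k) = sSkewN lam mu n := by
  induction k with
  | zero => rfl
  | succ k ih =>
    have h1 : n + (k+1) = (n + k) + 1 := rfl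
    rw [h1, sSkewN_succ lam mu (n+k) (plen_vanish hlam _ (by omega))
      (plen_vanish hmu _ (le_trans (plen_le_plen hlam hsub) (by omega))), ih]

end
end AK

/-- **Proposition (commutation of `ω` and `φ_t` on skew Schur functions).**
`ω φ_t s_{λ/μ} = (-1)^{(t-1)(|λ^{(0)}|+⋯+|λ^{(t-1)}| - |μ^{(0)}|-⋯-|μ^{(t-1)}|)} φ_t ω s_{λ/μ}`. -/
theorem omega_phi_skew (t : ℕ) (ht : 2 ≤ t) (lam mu : ℕ → ℕ)
    (hlam : IsPartition lam) (hmu : IsPartition mu) (hsub : SubP mu lam) :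
    omegaSym (phi t (sSkew lam mu)) =
      (msign (((t : ℤ) - 1) *
        ((∑ r ∈ Finset.range t, (psize (tQuot t lam r) : ℤ)) -
          ∑ r ∈ Finset.range t, (psize (tQuot t mu r) : ℤ))) : SymF) *
        phi t (omegaSym (sSkew lam mu)) := by
  classical
  have ht0 : 0 < t := by omega
  set Nc := t * (plen lam + 1) with hNc
  set Nm := t * (plen mu + 1) with hNm
  have hpp : plen mu ≤ plen lam := AK.plen_le_plen hlam hsub
  have hNcge : plen lam + 1 ≤ Nc := Nat.le_mul_of_pos_left (plen lam + 1) ht0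
  have hNmge : plen mu + 1 ≤ Nm := Nat.le_mul_of_pos_left (plen mu + 1) ht0
  have hlamvan := AK.plen_vanish hlam
  have hmuvan := AK.plen_vanish hmu
  have hlamNc : plen lam ≤ Nc := by omega
  have hmuNc : plen mu ≤ Nc := by omega
  -- replace sSkew by the Nc-sized determinant
  obtain ⟨k0, hk0⟩ : ∃ k0, Nc = plen lam + k0 := ⟨Nc - plen lam, by omega⟩
  have hext : sSkewN lam mu (plen lam) = sSkewN lam mu Nc := by
    rw [hk0, AK.sSkewN_add lam mu hlam hmu hsub (le_refl _) k0]
  have hskew : sSkew lam mu = sSkewN lam mu Nc := by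
    unfold sSkew
    rw [if_pos hsub, hext]
  rw [hskew, AK.omega_phi_comm t ht0, AK.phi_omega_sSkewN t lam mu Nc]
  -- abbreviations
  set Sl : ℤ := ∑ r ∈ Finset.range t, (psize (tQuot t lam r) : ℤ) with hSl
  set Sm : ℤ := ∑ r ∈ Finset.range t, (psize (tQuot t mu r) : ℤ) with hSm
  set D : ℤ := (psize lam : ℤ) - (psize mu : ℤ) with hD
  by_cases hdvd : (t : ℤ) ∣ D
  · by_cases hm : ∀ r, r < t → mr t lam Nc r = mr t mu Nc r
    · -- matched case: compute the quotient sizes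
      have hC1l := AK.quot_size t ht0 lam hlam.1 hlamvan
      rw [← hNc] at hC1l
      have hC1m := AK.quot_size t ht0 mu hmu.1 hmuvan
      rw [← hNm] at hC1m
      obtain ⟨k1, hk1⟩ : ∃ k1, plen lam = plen mu + k1 := ⟨plen lam - plen mu, by omega⟩
      have hNcNm : Nc = Nm + k1 * t := by rw [hNc, hNm, hk1]; ring
      have hEinv := AK.E_invariant ht0 hmu.1 hmuvan (le_trans (by omega) hNmge) k1
      rw [← hNcNm] at hEinv
      have hE : AK.Ecount t lam Nc = AK.Ecount t mu Nc := by
        unfold AK.Ecount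
        exact Finset.sum_congr rfl fun r hr => by
          rw [hm r (Finset.mem_range.mp hr)]
      -- cast the counting identities to ℤ
      have hSl' : Sl = ((∑ r ∈ Finset.range t, psize (tQuot t lam r) : ℕ) : ℤ) := by
        rw [hSl]; push_cast; rfl
      have hSm' : Sm = ((∑ r ∈ Finset.range t, psize (tQuot t mu r) : ℕ) : ℤ) := by
        rw [hSm]; push_cast; rfl
      have hc1l : (t : ℤ) * Sl + (AK.Ecount t lam Nc : ℤ) =
          (psize lam : ℤ) + (AK.tri Nc : ℤ) := by
        rw [hSl']; exact_mod_cast congrArg (fun x : ℕ => (x : ℤ)) hC1l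
      have hc1m : (t : ℤ) * Sm + (AK.Ecount t mu Nm : ℤ) =
          (psize mu : ℤ) + (AK.tri Nm : ℤ) := by
        rw [hSm']; exact_mod_cast congrArg (fun x : ℕ => (x : ℤ)) hC1m
      have hDt : D = (t : ℤ) * (Sl - Sm) := by
        have hdist : (t : ℤ) * (Sl - Sm) = (t : ℤ) * Sl - (t : ℤ) * Sm := by ring
        have hEc : (AK.Ecount t lam Nc : ℤ) = (AK.Ecount t mu Nc : ℤ) := by
          rw [hE]
        omega
      have hQ : Sl - Sm = D / (t : ℤ) := by
        rw [hDt, Int.mul_ediv_cancel_left _ (by positivity)]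
      rw [AK.tau_detM ht0 hlamvan hmuvan hlamNc hmuNc hdvd, hQ]
    · -- mismatched m-vectors: determinant vanishes
      push_neg at hm
      obtain ⟨r0, hr0, hne0⟩ := hm
      have hlt : ∃ r', r' ∈ Finset.range t ∧ mr t mu Nc r' < mr t lam Nc r' := by
        by_contra hno
        push_neg at hno
        have hlee : ∀ r' ∈ Finset.range t, mr t lam Nc r' ≤ mr t mu Nc r' :=
          fun r' hr' => hno r' hr'
        have hstrict : ∃ r' ∈ Finset.range t, mr t lam Nc r' < mr t mu Nc r' :=
          ⟨r0, Finset.mem_range.mpr hr0, lt_of_le_of_ne (hlee r0 (Finset.mem_range.mpr hr0)) hne0⟩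
        have := Finset.sum_lt_sum hlee hstrict
        rw [AK.mr_total ht0 hlam.1, AK.mr_total ht0 hmu.1] at this
        omega
      obtain ⟨r', _, hr'⟩ := hlt
      rw [AK.detM_zero_of_mr_ne ht0 hlam.1 hmu.1 hr', map_zero, mul_zero]
  · rw [AK.detM_zero_of_not_dvd ht0 hlamvan hmuvan hlamNc hmuNc hdvd, map_zero, mul_zero]

end
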